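/- arXiv:2112.04416 — 2 statements merged into one kernel-verified Lean document; each statement's English description precedes it below -/
import Mathlib

section
/- For the Thue–Morse word t, if i is an odd natural number and t is the natural number with 2^t ≤ i < 2^{t+1}, then the periodicity function satisfies p_t(i) = 3 · 2^t. -/
open Finset Filter Asymptotics

/-- `n` is a local period of the infinite word `w` at position `i`:
`n ≥ 1` and either (`n ≤ i` and `w_{i+k} = w_{i-n+k}` for all `k < n`)
or (`n > i` and `w_k = w_{n+k}` for all `k < i`). -/
def IsLocalPeriodAt {α : Type*} (w : ℕ → α) (i n : ℕ) : Prop :=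
  1 ≤ n ∧ ((n ≤ i ∧ ∀ k < n, w (i + k) = w (i - n + k)) ∨
           (i < n ∧ ∀ k < i, w k = w (n + k)))

/-- The periodicity function `p_w(i)`: the least local period of `w` at `i`. -/
noncomputable def perFn {α : Type*} (w : ℕ → α) (i : ℕ) : ℕ :=
  sInf {n | IsLocalPeriodAt w i n}

/-- The summatory function `P_w(n) = ∑_{j<n} p_w(j)`. -/
noncomputable def sumFn {α : Type*} (w : ℕ → α) (n : ℕ) : ℕ :=
  ∑ j ∈ Finset.range n, perFn w j

/-- The periodic complexity `h_w(n) = P_w(n)/n`. -/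
noncomputable def perComplexity {α : Type*} (w : ℕ → α) (n : ℕ) : ℝ :=
  (sumFn w n : ℝ) / n

/-- The Thue–Morse word: `t_i = 0` iff the number of 1's in the binary
representation of `i` is even. -/
def tm (i : ℕ) : ℕ :=
  if Even ((Nat.digits 2 i).count 1) then 0 else 1

lemma tm_zero : tm 0 = 0 := by simp [tm]

lemma tm_two_mul (q : ℕ) : tm (2 * q) = tm q := by
  rcases Nat.eq_zero_or_pos q with h | h
  · simp [h]
  · unfold tm
    rw [Nat.digits_def' (by norm_num : 1 < 2) (by omega)]
    simp [Nat.mul_div_cancel_left, Nat.mul_mod_right]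

lemma tm_two_mul_add_one (q : ℕ) : tm (2 * q + 1) = 1 - tm q := by
  unfold tm
  rw [Nat.digits_def' (by norm_num : 1 < 2) (by omega)]
  have h1 : (2 * q + 1) % 2 = 1 := by omega
  have h2 : (2 * q + 1) / 2 = q := by omega
  rw [h1, h2]
  simp only [List.count_cons, beq_self_eq_true, if_true, Nat.even_add_one]
  by_cases h : Even ((Nat.digits 2 q).count 1) <;> simp [h]

lemma tm_cases (k : ℕ) : tm k = 0 ∨ tm k = 1 := by unfold tm; split <;> simp

lemma tm_one : tm 1 = 1 := by
  have := tm_two_mul_add_one 0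
  simpa [tm_zero] using this

/-- adjacent equal letters occur only at odd positions -/
lemma tm_adj (j : ℕ) (h : tm j = tm (j + 1)) : j % 2 = 1 := by
  by_contra hc
  obtain ⟨q, rfl⟩ : ∃ q, j = 2 * q := ⟨j / 2, by omega⟩
  rw [tm_two_mul, tm_two_mul_add_one] at h
  rcases tm_cases q with h' | h' <;> omega

lemma tm_flip (q r : ℕ) (h : tm (2 * q + 1) = tm (2 * r + 1)) : tm q = tm r := by
  rw [tm_two_mul_add_one, tm_two_mul_add_one] at h
  rcases tm_cases q with h' | h' <;> rcases tm_cases r with h'' | h'' <;> omega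

/-- No square in the Thue–Morse word has an odd center. -/
lemma no_sq (n : ℕ) : ∀ p, 1 ≤ n → Odd (p + n) →
    (∀ k < n, tm (p + k) = tm (p + n + k)) → False := by
  induction n using Nat.strong_induction_on with
  | _ n ih =>
    intro p hn hodd H
    have hodd' : (p + n) % 2 = 1 := Nat.odd_iff.mp hodd
    rcases Nat.even_or_odd n with he | ho
    · -- n even, n = 2m
      have hne : n % 2 = 0 := Nat.even_iff.mp he
      obtain ⟨m, hm⟩ : ∃ m, n = 2 * m := ⟨n / 2, by omega⟩
      have hm1 : 1 ≤ m := by omega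
      obtain ⟨P, hP⟩ : ∃ P, p = 2 * P + 1 := ⟨p / 2, by omega⟩
      have key : ∀ q, P ≤ q → q ≤ P + m → tm q = tm (q + m) := by
        intro q hq1 hq2
        rcases lt_or_eq_of_le hq2 with hlt | heq
        · -- use odd positions: k = 2*(q-P)
          have hk : 2 * (q - P) < n := by omega
          have h := H (2 * (q - P)) hk
          rw [show p + 2 * (q - P) = 2 * q + 1 by omega,
              show p + n + 2 * (q - P) = 2 * (q + m) + 1 by omega] at h
          exact tm_flip _ _ h
        · -- q = P + m; use even positions: k = 2*(q-P) - 1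
          have hk : 2 * (q - P) - 1 < n := by omega
          have h := H (2 * (q - P) - 1) hk
          rw [show p + (2 * (q - P) - 1) = 2 * q by omega,
              show p + n + (2 * (q - P) - 1) = 2 * (q + m) by omega,
              tm_two_mul, tm_two_mul] at h
          exact h
      rcases Nat.even_or_odd (P + m) with hc | hc
      · -- center C = P+m even, use C+1: square at P+1
        refine ih m (by omega) (P + 1) hm1 ?_ ?_
        · rw [Nat.odd_iff]; have := Nat.even_iff.mp hc; omega
        · intro k hk
          have h := key (P + 1 + k) (by omega) (by omega)
          rwa [show P + 1 + k + m = P + 1 + m + k by omega] at h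
      · refine ih m (by omega) P hm1 ?_ ?_
        · rw [Nat.odd_iff]; exact Nat.odd_iff.mp hc
        · intro k hk
          have h := key (P + k) (by omega) (by omega)
          rwa [show P + k + m = P + m + k by omega] at h
    · -- n odd, p even
      have hno : n % 2 = 1 := Nat.odd_iff.mp ho
      have hpe : p % 2 = 0 := by omega
      by_cases hex : ∃ k, k + 1 < n ∧ tm (p + k) = tm (p + k + 1)
      · obtain ⟨k, hk, hkeq⟩ := hex
        have hop : (p + k) % 2 = 1 := tm_adj _ hkeq
        have e1 := H k (by omega)
        have e2 := H (k + 1) hk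
        have e2' : tm (p + k + 1) = tm (p + n + k + 1) := by
          rw [show p + k + 1 = p + (k + 1) by omega,
              show p + n + k + 1 = p + n + (k + 1) by omega]
          exact e2
        have : tm (p + n + k) = tm (p + n + k + 1) := by
          rw [← e1, hkeq, e2']
        have := tm_adj _ this
        omega
      · push_neg at hex
        -- alternation: tm (p + 2*k) = tm p for 2*k ≤ n-1
        have alt : ∀ k, 2 * k ≤ n - 1 → tm (p + 2 * k) = tm p := by
          intro k
          induction k with
          | zero => intro _; rfl
          | succ k ihk =>
            intro hk2
            have h1 : tm (p + 2 * k) ≠ tm (p + 2 * k + 1) := hex (2 * k) (by omega)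
            have h2 : tm (p + 2 * k + 1) ≠ tm (p + 2 * k + 1 + 1) := by
              have := hex (2 * k + 1) (by omega)
              rwa [show p + (2 * k + 1) = p + 2 * k + 1 by omega] at this
            have h3 : tm (p + 2 * (k + 1)) = tm (p + 2 * k) := by
              rcases tm_cases (p + 2 * k) with h | h <;>
              rcases tm_cases (p + 2 * k + 1) with h' | h' <;>
              rcases tm_cases (p + 2 * k + 1 + 1) with h'' | h'' <;>
              · rw [show p + 2 * (k + 1) = p + 2 * k + 1 + 1 by omega]; omega
            rw [h3, ihk (by omega)]
        have h0 := H 0 (by omega)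
        rw [Nat.add_zero, Nat.add_zero] at h0
        have hlast := alt ((n - 1) / 2) (by omega)
        rw [show p + 2 * ((n - 1) / 2) = p + (n - 1) by omega] at hlast
        have : tm (p + (n - 1)) = tm (p + (n - 1) + 1) := by
          rw [hlast, show p + (n - 1) + 1 = p + n by omega]; exact h0
        have := tm_adj _ this
        omega

/-- the prefix of length i cannot reoccur at position n for i ≤ n < 3·2^t -/
lemma branchB : ∀ t i n, i % 2 = 1 → 2 ^ t ≤ i → i < 2 ^ (t + 1) → i ≤ n →
    n < 3 * 2 ^ t → (∀ k < i, tm k = tm (n + k)) → False := by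
  intro t
  induction t with
  | zero =>
    intro i n h1 h2 h3 h4 h5 H
    have hi : i = 1 := by simp at h2 h3; omega
    subst hi
    have h := H 0 (by omega)
    rw [tm_zero] at h
    have hn : n = 1 ∨ n = 2 := by omega
    rcases hn with rfl | rfl
    · rw [tm_one] at h; omega
    · rw [show (2:ℕ) + 0 = 2 * 1 by omega, tm_two_mul, tm_one] at h; omega
  | succ t ih =>
    intro i n h1 h2 h3 h4 h5 H
    have hpow : (2:ℕ) ^ (t + 1) = 2 * 2 ^ t := by ring
    have hpow2 : (2:ℕ) ^ (t + 2) = 4 * 2 ^ t := by ring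
    have hpos : 0 < (2:ℕ) ^ t := Nat.pow_pos (by norm_num)
    have hi3 : 3 ≤ i := by omega
    -- n is even
    have hne : n % 2 = 0 := by
      by_contra hc
      obtain ⟨q, rfl⟩ : ∃ q, n = 2 * q + 1 := ⟨n / 2, by omega⟩
      have e1 := H 1 (by omega)
      have e2 := H 2 (by omega)
      rw [tm_one, show 2 * q + 1 + 1 = 2 * (q + 1) by omega, tm_two_mul] at e1
      rw [show (2:ℕ) = 2 * 1 by omega, tm_two_mul, tm_one,
          show 2 * q + 1 + 2 * 1 = 2 * (q + 1) + 1 by omega, tm_two_mul_add_one] at e2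
      omega
    obtain ⟨n', rfl⟩ : ∃ n', n = 2 * n' := ⟨n / 2, by omega⟩
    obtain ⟨s, rfl⟩ : ∃ s, i = 2 * s + 1 := ⟨i / 2, by omega⟩
    have Hd : ∀ k, k ≤ s → tm k = tm (n' + k) := by
      intro k hk
      have h := H (2 * k) (by omega)
      rwa [tm_two_mul, show 2 * n' + 2 * k = 2 * (n' + k) by omega, tm_two_mul] at h
    rcases Nat.even_or_odd s with hs | hs
    · have hse := Nat.even_iff.mp hs
      exact ih (s + 1) n' (by omega) (by omega) (by omega) (by omega) (by omega)
        (fun k hk => Hd k (by omega))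
    · have hso := Nat.odd_iff.mp hs
      exact ih s n' (by omega) (by omega) (by omega) (by omega) (by omega)
        (fun k hk => Hd k (by omega))

lemma tm_exist : ∀ t, ∀ k < 2 ^ (t + 1), tm (3 * 2 ^ t + k) = tm k := by
  intro t
  induction t with
  | zero =>
    intro k hk
    interval_cases k
    · rw [show 3 * 2 ^ 0 + 0 = 2 * 1 + 1 by norm_num, tm_two_mul_add_one, tm_one, tm_zero]
    · rw [show 3 * 2 ^ 0 + 1 = 2 * 2 by norm_num, tm_two_mul,
          show (2:ℕ) = 2 * 1 by omega, tm_two_mul]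
  | succ t ih =>
    intro k hk
    have hpow : (2:ℕ) ^ (t + 2) = 2 * 2 ^ (t + 1) := by ring
    rcases Nat.even_or_odd k with he | ho
    · obtain ⟨k', rfl⟩ : ∃ k', k = 2 * k' := ⟨k / 2, by have := Nat.even_iff.mp he; omega⟩
      rw [show 3 * 2 ^ (t + 1) + 2 * k' = 2 * (3 * 2 ^ t + k') by ring, tm_two_mul,
          tm_two_mul, ih k' (by omega)]
    · obtain ⟨k', rfl⟩ : ∃ k', k = 2 * k' + 1 := ⟨k / 2, by have := Nat.odd_iff.mp ho; omega⟩
      rw [show 3 * 2 ^ (t + 1) + (2 * k' + 1) = 2 * (3 * 2 ^ t + k') + 1 by ring,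
          tm_two_mul_add_one, tm_two_mul_add_one, ih k' (by omega)]

theorem tm_perFn_odd (i t : ℕ) (hi : Odd i) (h1 : 2 ^ t ≤ i) (h2 : i < 2 ^ (t + 1)) :
    perFn tm i = 3 * 2 ^ t := by
  have hpos : 0 < (2:ℕ) ^ t := Nat.pow_pos (by norm_num)
  have hpow : (2:ℕ) ^ (t + 1) = 2 * 2 ^ t := by ring
  have hiN : i < 3 * 2 ^ t := by omega
  have hmem : IsLocalPeriodAt tm i (3 * 2 ^ t) := by
    refine ⟨by omega, Or.inr ⟨hiN, fun k hk => ?_⟩⟩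
    exact (tm_exist t k (by omega)).symm
  have hlb : ∀ n, IsLocalPeriodAt tm i n → 3 * 2 ^ t ≤ n := by
    intro n ⟨hn1, h⟩
    by_contra hlt
    push_neg at hlt
    rcases h with ⟨hni, hA⟩ | ⟨hin, hB⟩
    · refine no_sq n (i - n) hn1 ?_ ?_
      · rw [show i - n + n = i by omega]; exact hi
      · intro k hk
        rw [show i - n + n + k = i + k by omega]
        exact (hA k hk).symm
    · exact branchB t i n (Nat.odd_iff.mp hi) h1 h2 (by omega) hlt hB
  have hne : {n | IsLocalPeriodAt tm i n}.Nonempty := ⟨3 * 2 ^ t, hmem⟩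
  exact le_antisymm (Nat.sInf_le hmem) (hlb _ (Nat.sInf_mem hne))
end

section
/- For all n ≥ 1, the summatory function of the periodicity function of the period-doubling word satisfies ((1/3)log₂ n − 1/18)·n + 4/9 ≤ P_pd(n) ≤ ((4/3)log₂ n + 22/9)·n + 5/9. -/
open Finset Filter Asymptotics

/-- The period-doubling word: `pd_i = 1` iff the 2-adic valuation of `i+1` is odd. -/
def pd (i : ℕ) : ℕ :=
  if Odd ((i + 1).factorization 2) then 1 else 0

lemma pd_le_one (i : ℕ) : pd i ≤ 1 := by unfold pd; split <;> omega

lemma pd_even (k : ℕ) : pd (2 * k) = 0 := by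
  unfold pd
  rw [Nat.factorization_eq_zero_of_not_dvd (by omega)]
  simp

lemma pd_odd (k : ℕ) : pd (2 * k + 1) = 1 - pd k := by
  unfold pd
  have h : (2 * k + 1 + 1).factorization 2 = (k + 1).factorization 2 + 1 := by
    have : 2 * k + 1 + 1 = 2 * (k + 1) := by ring
    rw [this, Nat.factorization_mul (by norm_num) (Nat.succ_ne_zero k)]
    simp [Nat.Prime.factorization_self Nat.prime_two, Nat.add_comm]
  simp only [h, Nat.odd_add_one]
  by_cases hO : Odd ((k + 1).factorization 2) <;> simp [hO]

lemma pd_zero : pd 0 = 0 := pd_even 0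
lemma pd_one : pd 1 = 1 := by have := pd_odd 0; norm_num [pd_zero] at this; exact this

lemma pd_no_consec (k : ℕ) (h : pd k = 1) : pd (k + 1) = 0 := by
  unfold pd at h ⊢
  split at h
  · rename_i hO
    have h2 : 2 ∣ (k+1) := by
      rcases Nat.eq_zero_or_pos ((k+1).factorization 2) with h0 | hp
      · rw [h0] at hO; simp at hO
      · exact Nat.dvd_of_factorization_pos (by omega)
    rw [Nat.factorization_eq_zero_of_not_dvd (by omega)]
    simp
  · omega


lemma lp_one_iff (i : ℕ) (hi : 1 ≤ i) :
    IsLocalPeriodAt pd i 1 ↔ pd i = pd (i - 1) := by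
  constructor
  · rintro ⟨-, ⟨-, H⟩ | ⟨h, -⟩⟩
    · simpa using H 0 one_pos
    · omega
  · intro h
    refine ⟨le_refl 1, Or.inl ⟨hi, fun k hk => ?_⟩⟩
    have : k = 0 := by omega
    subst this; simpa using h

lemma lp_even_even (n m : ℕ) (hn : 1 ≤ n) (hm : 1 ≤ m) :
    IsLocalPeriodAt pd (2 * n) (2 * m) ↔ IsLocalPeriodAt pd n m := by
  constructor
  · rintro ⟨-, ⟨hle, H⟩ | ⟨hlt, H⟩⟩
    · refine ⟨hm, Or.inl ⟨by omega, fun t ht => ?_⟩⟩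
      have h1 := H (2 * t + 1) (by omega)
      rw [show 2 * n + (2 * t + 1) = 2 * (n + t) + 1 by ring,
          show 2 * n - 2 * m + (2 * t + 1) = 2 * (n - m + t) + 1 by omega,
          pd_odd, pd_odd] at h1
      have := pd_le_one (n + t); have := pd_le_one (n - m + t); omega
    · refine ⟨hm, Or.inr ⟨by omega, fun t ht => ?_⟩⟩
      have h1 := H (2 * t + 1) (by omega)
      rw [show 2 * m + (2 * t + 1) = 2 * (m + t) + 1 by ring, pd_odd, pd_odd] at h1
      have := pd_le_one t; have := pd_le_one (m + t); omega
  · rintro ⟨-, ⟨hle, H⟩ | ⟨hlt, H⟩⟩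
    · refine ⟨by omega, Or.inl ⟨by omega, fun k hk => ?_⟩⟩
      rcases Nat.even_or_odd k with ⟨t, et⟩ | ⟨t, et⟩
      · rw [show 2 * n + k = 2 * (n + t) by omega,
            show 2 * n - 2 * m + k = 2 * (n - m + t) by omega, pd_even, pd_even]
      · have h1 := H t (by omega)
        rw [show 2 * n + k = 2 * (n + t) + 1 by omega,
            show 2 * n - 2 * m + k = 2 * (n - m + t) + 1 by omega, pd_odd, pd_odd, h1]
    · refine ⟨by omega, Or.inr ⟨by omega, fun k hk => ?_⟩⟩
      rcases Nat.even_or_odd k with ⟨t, et⟩ | ⟨t, et⟩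
      · rw [show k = 2 * t by omega, show 2 * m + 2 * t = 2 * (m + t) by ring,
            pd_even, pd_even]
      · have h1 := H t (by omega)
        rw [show k = 2 * t + 1 by omega,
            show 2 * m + (2 * t + 1) = 2 * (m + t) + 1 by ring, pd_odd, pd_odd, h1]

lemma lp_odd_even (n m : ℕ) (hn : 1 ≤ n) (hm : 1 ≤ m) :
    IsLocalPeriodAt pd (2 * n + 1) (2 * m) ↔ IsLocalPeriodAt pd n m := by
  constructor
  · rintro ⟨-, ⟨hle, H⟩ | ⟨hlt, H⟩⟩
    · refine ⟨hm, Or.inl ⟨by omega, fun t ht => ?_⟩⟩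
      have h1 := H (2 * t) (by omega)
      rw [show 2 * n + 1 + 2 * t = 2 * (n + t) + 1 by ring,
          show 2 * n + 1 - 2 * m + 2 * t = 2 * (n - m + t) + 1 by omega,
          pd_odd, pd_odd] at h1
      have := pd_le_one (n + t); have := pd_le_one (n - m + t); omega
    · refine ⟨hm, Or.inr ⟨by omega, fun t ht => ?_⟩⟩
      have h1 := H (2 * t + 1) (by omega)
      rw [show 2 * m + (2 * t + 1) = 2 * (m + t) + 1 by ring, pd_odd, pd_odd] at h1
      have := pd_le_one t; have := pd_le_one (m + t); omega
  · rintro ⟨-, ⟨hle, H⟩ | ⟨hlt, H⟩⟩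
    · refine ⟨by omega, Or.inl ⟨by omega, fun k hk => ?_⟩⟩
      rcases Nat.even_or_odd k with ⟨t, et⟩ | ⟨t, et⟩
      · have h1 := H t (by omega)
        rw [show 2 * n + 1 + k = 2 * (n + t) + 1 by omega,
            show 2 * n + 1 - 2 * m + k = 2 * (n - m + t) + 1 by omega, pd_odd, pd_odd, h1]
      · rw [show 2 * n + 1 + k = 2 * (n + t + 1) by omega,
            show 2 * n + 1 - 2 * m + k = 2 * (n - m + t + 1) by omega, pd_even, pd_even]
    · refine ⟨by omega, Or.inr ⟨by omega, fun k hk => ?_⟩⟩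
      rcases Nat.even_or_odd k with ⟨t, et⟩ | ⟨t, et⟩
      · rw [show k = 2 * t by omega, show 2 * m + 2 * t = 2 * (m + t) by ring,
            pd_even, pd_even]
      · have h1 := H t (by omega)
        rw [show k = 2 * t + 1 by omega,
            show 2 * m + (2 * t + 1) = 2 * (m + t) + 1 by ring, pd_odd, pd_odd, h1]

lemma lp_not_odd (i s : ℕ) (hi : 2 ≤ i) (hs : 1 ≤ s) :
    ¬ IsLocalPeriodAt pd i (2 * s + 1) := by
  rintro ⟨-, ⟨hle, H⟩ | ⟨hlt, H⟩⟩
  · rcases Nat.even_or_odd i with ⟨n, en⟩ | ⟨n, en⟩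
    · -- i = 2n, s < n
      have h0 := H 0 (by omega)
      have h2 := H 2 (by omega)
      rw [show i + 0 = 2 * n by omega,
          show i - (2 * s + 1) + 0 = 2 * (n - s - 1) + 1 by omega, pd_even, pd_odd] at h0
      rw [show i + 2 = 2 * (n + 1) by omega,
          show i - (2 * s + 1) + 2 = 2 * (n - s) + 1 by omega, pd_even, pd_odd] at h2
      have e1 : pd (n - s - 1) = 1 := by have := pd_le_one (n - s - 1); omega
      have e2 := pd_no_consec _ e1
      rw [show n - s - 1 + 1 = n - s by omega] at e2
      have := pd_le_one (n - s); omega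
    · -- i = 2n+1, s ≤ n
      have h0 := H 0 (by omega)
      have h2 := H 2 (by omega)
      rw [show i + 0 = 2 * n + 1 by omega,
          show i - (2 * s + 1) + 0 = 2 * (n - s) by omega, pd_even, pd_odd] at h0
      rw [show i + 2 = 2 * (n + 1) + 1 by omega,
          show i - (2 * s + 1) + 2 = 2 * (n - s + 1) by omega, pd_even, pd_odd] at h2
      have e1 : pd n = 1 := by have := pd_le_one n; omega
      have e2 := pd_no_consec _ e1
      have := pd_le_one (n + 1); omega
  · have h1 := H 1 (by omega)
    rw [show 2 * s + 1 + 1 = 2 * (s + 1) by ring, pd_even, pd_one] at h1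
    exact one_ne_zero h1

def f : ℕ → ℕ
  | 0 => 1
  | 1 => 2
  | (n + 2) => if pd (n + 2) = pd (n + 1) then 1 else 2 * f (n / 2 + 1)
  decreasing_by omega

lemma f_pos : ∀ i, 1 ≤ f i := by
  intro i
  induction i using Nat.strong_induction_on with
  | _ i ih =>
    match i with
    | 0 => simp [f]
    | 1 => simp [f]
    | (n + 2) =>
      rw [f]
      split
      · omega
      · have := ih (n / 2 + 1) (by omega); omega

lemma perFn_eq_of {v : ℕ} (i : ℕ) (hv : IsLocalPeriodAt pd i v)
    (hmin : ∀ q, IsLocalPeriodAt pd i q → v ≤ q) : perFn pd i = v :=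
  le_antisymm (Nat.sInf_le hv) (le_csInf ⟨v, hv⟩ hmin)

lemma perFn_zero : perFn pd 0 = 1 := by
  apply perFn_eq_of
  · exact ⟨le_refl 1, Or.inr ⟨one_pos, fun k hk => absurd hk (by omega)⟩⟩
  · exact fun q hq => hq.1

lemma perFn_one : perFn pd 1 = 2 := by
  apply perFn_eq_of
  · refine ⟨by norm_num, Or.inr ⟨by norm_num, fun k hk => ?_⟩⟩
    have : k = 0 := by omega
    subst this
    rw [show (2 : ℕ) + 0 = 2 * 1 by norm_num, pd_zero, pd_even]
  · intro q hq
    have h1 := hq.1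
    by_contra h
    have : q = 1 := by omega
    subst this
    have := (lp_one_iff 1 le_rfl).mp hq
    rw [pd_one, show (1:ℕ) - 1 = 0 by omega, pd_zero] at this
    exact one_ne_zero this

lemma lp_mem (i : ℕ) (h : 1 ≤ perFn pd i) : IsLocalPeriodAt pd i (perFn pd i) := by
  rcases Set.eq_empty_or_nonempty {n | IsLocalPeriodAt pd i n} with he | hne
  · exfalso; unfold perFn at h; rw [he] at h; simp at h
  · exact Nat.sInf_mem hne

lemma perFn_eq_f : ∀ i, perFn pd i = f i := by
  intro i
  induction i using Nat.strong_induction_on with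
  | _ i ih =>
    match i with
    | 0 => rw [perFn_zero]; simp [f]
    | 1 => rw [perFn_one]; simp [f]
    | (j + 2) => by_cases hc : pd (j + 2) = pd (j + 1)
                 · rw [show f (j+2) = 1 by rw [f]; simp [hc]]
                   apply perFn_eq_of
                   · exact (lp_one_iff (j+2) (by omega)).mpr (by
                       rw [show j + 2 - 1 = j + 1 by omega]; exact hc)
                   · exact fun q hq => hq.1
                 · set n := j / 2 + 1 with hn
                   have hlt : n < j + 2 := by omega
                   have key : perFn pd n = f n := ih n hlt
                   have hfn : IsLocalPeriodAt pd n (f n) := by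
                     rw [← key]; exact lp_mem n (by rw [key]; exact f_pos n)
                   have hfe : f (j + 2) = 2 * f n := by rw [f]; simp [hc]; rfl
                   rw [hfe]
                   have hn1 : 1 ≤ n := by omega
                   have hiform : j + 2 = 2 * n ∨ j + 2 = 2 * n + 1 := by omega
                   have hv : IsLocalPeriodAt pd (j + 2) (2 * f n) := by
                     rcases hiform with h | h <;> rw [h]
                     · exact (lp_even_even n (f n) hn1 (f_pos n)).mpr hfn
                     · exact (lp_odd_even n (f n) hn1 (f_pos n)).mpr hfn
                   apply perFn_eq_of _ hv
                   intro q hq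
                   rcases Nat.even_or_odd q with ⟨m, em⟩ | ⟨s, es⟩
                   · -- q = 2m
                     have hq1 := hq.1
                     have hm1 : 1 ≤ m := by omega
                     have hmem : IsLocalPeriodAt pd n m := by
                       rcases hiform with h | h
                       · exact (lp_even_even n m hn1 hm1).mp
                           (by rw [← h, show 2 * m = q by omega]; exact hq)
                       · exact (lp_odd_even n m hn1 hm1).mp
                           (by rw [← h, show 2 * m = q by omega]; exact hq)
                     have : f n ≤ m := by rw [← key]; exact Nat.sInf_le hmem
                     omega
                   · rcases Nat.eq_zero_or_pos s with h0 | hs1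
                     · exfalso
                       have : q = 1 := by omega
                       subst this
                       exact hc (by
                         have := (lp_one_iff (j+2) (by omega)).mp hq
                         rwa [show j + 2 - 1 = j + 1 by omega] at this)
                     · exfalso
                       exact lp_not_odd (j+2) s (by omega) hs1
                         (by rw [show 2 * s + 1 = q by omega]; exact hq)

lemma f_pair_bounds (k : ℕ) :
    2 * f (k + 1) + 1 ≤ f (2 * k + 2) + f (2 * k + 3) ∧
      f (2 * k + 2) + f (2 * k + 3) ≤ 2 * f (k + 1) + 2 := by
  have hpa := pd_le_one k
  have hpb := pd_le_one (k + 1)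
  have h22 : pd (2 * k + 2) = 0 := by rw [show 2 * k + 2 = 2 * (k + 1) by ring, pd_even]
  have h21 : pd (2 * k + 1) = 1 - pd k := pd_odd k
  have h23 : pd (2 * k + 3) = 1 - pd (k + 1) := by
    rw [show 2 * k + 3 = 2 * (k + 1) + 1 by ring, pd_odd]
  have e1 : f (2 * k + 2) = if pd (2 * k + 2) = pd (2 * k + 1) then 1 else 2 * f (k + 1) := by
    rw [show 2 * k + 2 = (2 * k) + 2 by ring, f, show 2 * k / 2 + 1 = k + 1 by omega]
  have e2 : f (2 * k + 3) = if pd (2 * k + 3) = pd (2 * k + 2) then 1 else 2 * f (k + 1) := by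
    rw [show 2 * k + 3 = (2 * k + 1) + 2 by ring, f, show (2 * k + 1) / 2 + 1 = k + 1 by omega]
  have hf1 := f_pos (k + 1)
  by_cases c1 : pd (2 * k + 2) = pd (2 * k + 1) <;>
    by_cases c2 : pd (2 * k + 3) = pd (2 * k + 2)
  · exfalso
    have ha : pd k = 1 := by omega
    have := pd_no_consec k ha
    omega
  · rw [e1, if_pos c1, e2, if_neg c2]; omega
  · rw [e1, if_neg c1, e2, if_pos c2]; omega
  · have ha : pd k = 0 := by omega
    have hb : pd (k + 1) = 0 := by omega
    have hf : f (k + 1) = 1 := by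
      cases k with
      | zero => rw [pd_one] at hb; omega
      | succ t =>
        have hcond : pd (t + 2) = pd (t + 1) := by
          rw [show t + 2 = t + 1 + 1 from rfl, hb, ha]
        have h' : f (t + 2) = 1 := by rw [f, if_pos hcond]
        exact h'
    rw [e1, if_neg c1, e2, if_neg c2, hf]
    omega

lemma sumFn_pd_eq (n : ℕ) : sumFn pd n = ∑ j ∈ Finset.range n, f j :=
  Finset.sum_congr rfl (fun j _ => perFn_eq_f j)

lemma sum_pair (n : ℕ) :
    ∑ j ∈ Finset.range (2 * n), f j = ∑ m ∈ Finset.range n, (f (2 * m) + f (2 * m + 1)) := by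
  induction n with
  | zero => simp
  | succ n ihn =>
    rw [show 2 * (n + 1) = (2 * n + 1) + 1 by ring, Finset.sum_range_succ,
        Finset.sum_range_succ, Finset.sum_range_succ, ihn]
    omega

lemma pair_low (m : ℕ) : 2 * f m + 1 ≤ f (2 * m) + f (2 * m + 1) := by
  match m with
  | 0 => simp [f]
  | (k + 1) =>
    have := (f_pair_bounds k).1
    rw [show 2 * (k + 1) + 1 = 2 * k + 3 by ring, show 2 * (k + 1) = 2 * k + 2 by ring]
    omega

lemma pair_high (m : ℕ) : f (2 * m) + f (2 * m + 1) ≤ 2 * f m + 2 := by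
  match m with
  | 0 => simp [f]
  | (k + 1) =>
    have := (f_pair_bounds k).2
    rw [show 2 * (k + 1) + 1 = 2 * k + 3 by ring, show 2 * (k + 1) = 2 * k + 2 by ring]
    omega

lemma S_even_low (n : ℕ) : 2 * sumFn pd n + n ≤ sumFn pd (2 * n) := by
  rw [sumFn_pd_eq, sumFn_pd_eq, sum_pair]
  calc 2 * ∑ j ∈ Finset.range n, f j + n
      = ∑ j ∈ Finset.range n, (2 * f j + 1) := by
        rw [Finset.sum_add_distrib, ← Finset.mul_sum]; simp
    _ ≤ _ := Finset.sum_le_sum (fun m _ => pair_low m)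

lemma S_even_high (n : ℕ) : sumFn pd (2 * n) ≤ 2 * sumFn pd n + 2 * n := by
  rw [sumFn_pd_eq, sumFn_pd_eq, sum_pair]
  calc ∑ m ∈ Finset.range n, (f (2 * m) + f (2 * m + 1))
      ≤ ∑ j ∈ Finset.range n, (2 * f j + 2) := Finset.sum_le_sum (fun m _ => pair_high m)
    _ = 2 * ∑ j ∈ Finset.range n, f j + 2 * n := by
        rw [Finset.sum_add_distrib, ← Finset.mul_sum]; simp [mul_comm]

lemma S_odd_low (n : ℕ) : 2 * sumFn pd n + n + 1 ≤ sumFn pd (2 * n + 1) := by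
  have h1 := S_even_low n
  have h2 : sumFn pd (2 * n + 1) = sumFn pd (2 * n) + f (2 * n) := by
    rw [sumFn_pd_eq, sumFn_pd_eq, Finset.sum_range_succ]
  have := f_pos (2 * n)
  omega

lemma S_even_high' (n : ℕ) : sumFn pd (2 * (n + 1)) ≤ 2 * sumFn pd (n + 1) + 2 * n + 1 := by
  rw [sumFn_pd_eq, sumFn_pd_eq, sum_pair]
  rw [Finset.sum_range_succ' _ n, Finset.sum_range_succ' (fun j => f j) n]
  have hb : ∀ m, f (2 * (m + 1)) + f (2 * (m + 1) + 1) ≤ 2 * f (m + 1) + 2 :=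
    fun m => pair_high (m + 1)
  calc (∑ m ∈ Finset.range n, (f (2 * (m + 1)) + f (2 * (m + 1) + 1))) + (f 0 + f 1)
      ≤ (∑ m ∈ Finset.range n, (2 * f (m + 1) + 2)) + (f 0 + f 1) := by
        exact Nat.add_le_add_right (Finset.sum_le_sum (fun m _ => hb m)) _
    _ ≤ _ := by
        rw [Finset.sum_add_distrib, ← Finset.mul_sum]
        simp [f]
        omega

lemma S_odd_high (n : ℕ) : sumFn pd (2 * n + 1) ≤ 2 * sumFn pd (n + 1) + 2 * n := by
  have h1 := S_even_high' n
  have h2 : sumFn pd (2 * (n + 1)) = sumFn pd (2 * n + 1) + f (2 * n + 1) := by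
    rw [sumFn_pd_eq, sumFn_pd_eq, show 2 * (n + 1) = (2 * n + 1) + 1 by ring,
        Finset.sum_range_succ]
  have := f_pos (2 * n + 1)
  omega
lemma pd_v0 : pd 0 = 0 := pd_zero

lemma pd_v1 : pd 1 = 1 := pd_one

lemma pd_v2 : pd 2 = 0 := by rw [show (2:ℕ) = 2*1 from rfl, pd_even]

lemma pd_v3 : pd 3 = 0 := by rw [show (3:ℕ) = 2*1+1 from rfl, pd_odd, pd_v1]

lemma pd_v4 : pd 4 = 0 := by rw [show (4:ℕ) = 2*2 from rfl, pd_even]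

lemma pd_v5 : pd 5 = 1 := by rw [show (5:ℕ) = 2*2+1 from rfl, pd_odd, pd_v2]

lemma pd_v6 : pd 6 = 0 := by rw [show (6:ℕ) = 2*3 from rfl, pd_even]

lemma pd_v7 : pd 7 = 1 := by rw [show (7:ℕ) = 2*3+1 from rfl, pd_odd, pd_v3]

lemma pd_v8 : pd 8 = 0 := by rw [show (8:ℕ) = 2*4 from rfl, pd_even]

lemma pd_v9 : pd 9 = 1 := by rw [show (9:ℕ) = 2*4+1 from rfl, pd_odd, pd_v4]

lemma pd_v10 : pd 10 = 0 := by rw [show (10:ℕ) = 2*5 from rfl, pd_even]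

lemma pd_v11 : pd 11 = 0 := by rw [show (11:ℕ) = 2*5+1 from rfl, pd_odd, pd_v5]

lemma pd_v12 : pd 12 = 0 := by rw [show (12:ℕ) = 2*6 from rfl, pd_even]

lemma pd_v13 : pd 13 = 1 := by rw [show (13:ℕ) = 2*6+1 from rfl, pd_odd, pd_v6]

lemma pd_v14 : pd 14 = 0 := by rw [show (14:ℕ) = 2*7 from rfl, pd_even]

lemma pd_v15 : pd 15 = 0 := by rw [show (15:ℕ) = 2*7+1 from rfl, pd_odd, pd_v7]

lemma pd_v16 : pd 16 = 0 := by rw [show (16:ℕ) = 2*8 from rfl, pd_even]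

lemma pd_v17 : pd 17 = 1 := by rw [show (17:ℕ) = 2*8+1 from rfl, pd_odd, pd_v8]

lemma pd_v18 : pd 18 = 0 := by rw [show (18:ℕ) = 2*9 from rfl, pd_even]

lemma pd_v19 : pd 19 = 0 := by rw [show (19:ℕ) = 2*9+1 from rfl, pd_odd, pd_v9]

lemma pd_v20 : pd 20 = 0 := by rw [show (20:ℕ) = 2*10 from rfl, pd_even]

lemma pd_v21 : pd 21 = 1 := by rw [show (21:ℕ) = 2*10+1 from rfl, pd_odd, pd_v10]

lemma pd_v22 : pd 22 = 0 := by rw [show (22:ℕ) = 2*11 from rfl, pd_even]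

lemma pd_v23 : pd 23 = 1 := by rw [show (23:ℕ) = 2*11+1 from rfl, pd_odd, pd_v11]

lemma pd_v24 : pd 24 = 0 := by rw [show (24:ℕ) = 2*12 from rfl, pd_even]

lemma pd_v25 : pd 25 = 1 := by rw [show (25:ℕ) = 2*12+1 from rfl, pd_odd, pd_v12]

lemma pd_v26 : pd 26 = 0 := by rw [show (26:ℕ) = 2*13 from rfl, pd_even]

lemma pd_v27 : pd 27 = 0 := by rw [show (27:ℕ) = 2*13+1 from rfl, pd_odd, pd_v13]

lemma pd_v28 : pd 28 = 0 := by rw [show (28:ℕ) = 2*14 from rfl, pd_even]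

lemma pd_v29 : pd 29 = 1 := by rw [show (29:ℕ) = 2*14+1 from rfl, pd_odd, pd_v14]

lemma pd_v30 : pd 30 = 0 := by rw [show (30:ℕ) = 2*15 from rfl, pd_even]

lemma pd_v31 : pd 31 = 1 := by rw [show (31:ℕ) = 2*15+1 from rfl, pd_odd, pd_v15]

lemma pd_v32 : pd 32 = 0 := by rw [show (32:ℕ) = 2*16 from rfl, pd_even]

lemma f_v0 : f 0 = 1 := by rw [f]

lemma f_v1 : f 1 = 2 := by rw [f]

lemma f_v2 : f 2 = 4 := by rw [show (2:ℕ) = 0 + 2 from rfl, f]; norm_num [pd_v2, pd_v1, f_v1]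

lemma f_v3 : f 3 = 1 := by rw [show (3:ℕ) = 1 + 2 from rfl, f]; norm_num [pd_v3, pd_v2, f_v1]

lemma f_v4 : f 4 = 1 := by rw [show (4:ℕ) = 2 + 2 from rfl, f]; norm_num [pd_v4, pd_v3, f_v2]

lemma f_v5 : f 5 = 8 := by rw [show (5:ℕ) = 3 + 2 from rfl, f]; norm_num [pd_v5, pd_v4, f_v2]

lemma f_v6 : f 6 = 2 := by rw [show (6:ℕ) = 4 + 2 from rfl, f]; norm_num [pd_v6, pd_v5, f_v3]

lemma f_v7 : f 7 = 2 := by rw [show (7:ℕ) = 5 + 2 from rfl, f]; norm_num [pd_v7, pd_v6, f_v3]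

lemma f_v8 : f 8 = 2 := by rw [show (8:ℕ) = 6 + 2 from rfl, f]; norm_num [pd_v8, pd_v7, f_v4]

lemma f_v9 : f 9 = 2 := by rw [show (9:ℕ) = 7 + 2 from rfl, f]; norm_num [pd_v9, pd_v8, f_v4]

lemma f_v10 : f 10 = 16 := by rw [show (10:ℕ) = 8 + 2 from rfl, f]; norm_num [pd_v10, pd_v9, f_v5]

lemma f_v11 : f 11 = 1 := by rw [show (11:ℕ) = 9 + 2 from rfl, f]; norm_num [pd_v11, pd_v10, f_v5]

lemma f_v12 : f 12 = 1 := by rw [show (12:ℕ) = 10 + 2 from rfl, f]; norm_num [pd_v12, pd_v11, f_v6]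

lemma f_v13 : f 13 = 4 := by rw [show (13:ℕ) = 11 + 2 from rfl, f]; norm_num [pd_v13, pd_v12, f_v6]

lemma f_v14 : f 14 = 4 := by rw [show (14:ℕ) = 12 + 2 from rfl, f]; norm_num [pd_v14, pd_v13, f_v7]

lemma f_v15 : f 15 = 1 := by rw [show (15:ℕ) = 13 + 2 from rfl, f]; norm_num [pd_v15, pd_v14, f_v7]

lemma f_v16 : f 16 = 1 := by rw [show (16:ℕ) = 14 + 2 from rfl, f]; norm_num [pd_v16, pd_v15, f_v8]

lemma f_v17 : f 17 = 4 := by rw [show (17:ℕ) = 15 + 2 from rfl, f]; norm_num [pd_v17, pd_v16, f_v8]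

lemma f_v18 : f 18 = 4 := by rw [show (18:ℕ) = 16 + 2 from rfl, f]; norm_num [pd_v18, pd_v17, f_v9]

lemma f_v19 : f 19 = 1 := by rw [show (19:ℕ) = 17 + 2 from rfl, f]; norm_num [pd_v19, pd_v18, f_v9]

lemma f_v20 : f 20 = 1 := by rw [show (20:ℕ) = 18 + 2 from rfl, f]; norm_num [pd_v20, pd_v19, f_v10]

lemma f_v21 : f 21 = 32 := by rw [show (21:ℕ) = 19 + 2 from rfl, f]; norm_num [pd_v21, pd_v20, f_v10]

lemma f_v22 : f 22 = 2 := by rw [show (22:ℕ) = 20 + 2 from rfl, f]; norm_num [pd_v22, pd_v21, f_v11]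

lemma f_v23 : f 23 = 2 := by rw [show (23:ℕ) = 21 + 2 from rfl, f]; norm_num [pd_v23, pd_v22, f_v11]

lemma f_v24 : f 24 = 2 := by rw [show (24:ℕ) = 22 + 2 from rfl, f]; norm_num [pd_v24, pd_v23, f_v12]

lemma f_v25 : f 25 = 2 := by rw [show (25:ℕ) = 23 + 2 from rfl, f]; norm_num [pd_v25, pd_v24, f_v12]

lemma f_v26 : f 26 = 8 := by rw [show (26:ℕ) = 24 + 2 from rfl, f]; norm_num [pd_v26, pd_v25, f_v13]

lemma f_v27 : f 27 = 1 := by rw [show (27:ℕ) = 25 + 2 from rfl, f]; norm_num [pd_v27, pd_v26, f_v13]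

lemma f_v28 : f 28 = 1 := by rw [show (28:ℕ) = 26 + 2 from rfl, f]; norm_num [pd_v28, pd_v27, f_v14]

lemma f_v29 : f 29 = 8 := by rw [show (29:ℕ) = 27 + 2 from rfl, f]; norm_num [pd_v29, pd_v28, f_v14]

lemma f_v30 : f 30 = 2 := by rw [show (30:ℕ) = 28 + 2 from rfl, f]; norm_num [pd_v30, pd_v29, f_v15]

lemma f_v31 : f 31 = 2 := by rw [show (31:ℕ) = 29 + 2 from rfl, f]; norm_num [pd_v31, pd_v30, f_v15]

lemma f_v32 : f 32 = 2 := by rw [show (32:ℕ) = 30 + 2 from rfl, f]; norm_num [pd_v32, pd_v31, f_v16]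

lemma S_v1 : sumFn pd 1 = 1 := by rw [sumFn_pd_eq]; simp [f_v0]

lemma S_v3 : sumFn pd 3 = 7 := by rw [sumFn_pd_eq]; simp [Finset.sum_range_succ, f_v0, f_v1, f_v2]

lemma S_v5 : sumFn pd 5 = 9 := by rw [sumFn_pd_eq]; simp [Finset.sum_range_succ, f_v0, f_v1, f_v2, f_v3, f_v4]

lemma S_v7 : sumFn pd 7 = 19 := by rw [sumFn_pd_eq]; simp [Finset.sum_range_succ, f_v0, f_v1, f_v2, f_v3, f_v4, f_v5, f_v6]

lemma S_v9 : sumFn pd 9 = 23 := by rw [sumFn_pd_eq]; simp [Finset.sum_range_succ, f_v0, f_v1, f_v2, f_v3, f_v4, f_v5, f_v6, f_v7, f_v8]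

lemma S_v11 : sumFn pd 11 = 41 := by rw [sumFn_pd_eq]; simp [Finset.sum_range_succ, f_v0, f_v1, f_v2, f_v3, f_v4, f_v5, f_v6, f_v7, f_v8, f_v9, f_v10]

lemma S_v13 : sumFn pd 13 = 43 := by rw [sumFn_pd_eq]; simp [Finset.sum_range_succ, f_v0, f_v1, f_v2, f_v3, f_v4, f_v5, f_v6, f_v7, f_v8, f_v9, f_v10, f_v11, f_v12]

lemma S_v15 : sumFn pd 15 = 51 := by rw [sumFn_pd_eq]; simp [Finset.sum_range_succ, f_v0, f_v1, f_v2, f_v3, f_v4, f_v5, f_v6, f_v7, f_v8, f_v9, f_v10, f_v11, f_v12, f_v13, f_v14]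

lemma S_v17 : sumFn pd 17 = 53 := by rw [sumFn_pd_eq]; simp [Finset.sum_range_succ, f_v0, f_v1, f_v2, f_v3, f_v4, f_v5, f_v6, f_v7, f_v8, f_v9, f_v10, f_v11, f_v12, f_v13, f_v14, f_v15, f_v16]

lemma S_v19 : sumFn pd 19 = 61 := by rw [sumFn_pd_eq]; simp [Finset.sum_range_succ, f_v0, f_v1, f_v2, f_v3, f_v4, f_v5, f_v6, f_v7, f_v8, f_v9, f_v10, f_v11, f_v12, f_v13, f_v14, f_v15, f_v16, f_v17, f_v18]

lemma S_v21 : sumFn pd 21 = 63 := by rw [sumFn_pd_eq]; simp [Finset.sum_range_succ, f_v0, f_v1, f_v2, f_v3, f_v4, f_v5, f_v6, f_v7, f_v8, f_v9, f_v10, f_v11, f_v12, f_v13, f_v14, f_v15, f_v16, f_v17, f_v18, f_v19, f_v20]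

lemma S_v23 : sumFn pd 23 = 97 := by rw [sumFn_pd_eq]; simp [Finset.sum_range_succ, f_v0, f_v1, f_v2, f_v3, f_v4, f_v5, f_v6, f_v7, f_v8, f_v9, f_v10, f_v11, f_v12, f_v13, f_v14, f_v15, f_v16, f_v17, f_v18, f_v19, f_v20, f_v21, f_v22]

lemma S_v25 : sumFn pd 25 = 101 := by rw [sumFn_pd_eq]; simp [Finset.sum_range_succ, f_v0, f_v1, f_v2, f_v3, f_v4, f_v5, f_v6, f_v7, f_v8, f_v9, f_v10, f_v11, f_v12, f_v13, f_v14, f_v15, f_v16, f_v17, f_v18, f_v19, f_v20, f_v21, f_v22, f_v23, f_v24]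

lemma S_v27 : sumFn pd 27 = 111 := by rw [sumFn_pd_eq]; simp [Finset.sum_range_succ, f_v0, f_v1, f_v2, f_v3, f_v4, f_v5, f_v6, f_v7, f_v8, f_v9, f_v10, f_v11, f_v12, f_v13, f_v14, f_v15, f_v16, f_v17, f_v18, f_v19, f_v20, f_v21, f_v22, f_v23, f_v24, f_v25, f_v26]

lemma S_v29 : sumFn pd 29 = 113 := by rw [sumFn_pd_eq]; simp [Finset.sum_range_succ, f_v0, f_v1, f_v2, f_v3, f_v4, f_v5, f_v6, f_v7, f_v8, f_v9, f_v10, f_v11, f_v12, f_v13, f_v14, f_v15, f_v16, f_v17, f_v18, f_v19, f_v20, f_v21, f_v22, f_v23, f_v24, f_v25, f_v26, f_v27, f_v28]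

lemma S_v31 : sumFn pd 31 = 123 := by rw [sumFn_pd_eq]; simp [Finset.sum_range_succ, f_v0, f_v1, f_v2, f_v3, f_v4, f_v5, f_v6, f_v7, f_v8, f_v9, f_v10, f_v11, f_v12, f_v13, f_v14, f_v15, f_v16, f_v17, f_v18, f_v19, f_v20, f_v21, f_v22, f_v23, f_v24, f_v25, f_v26, f_v27, f_v28, f_v29, f_v30]

lemma S_v33 : sumFn pd 33 = 127 := by rw [sumFn_pd_eq]; simp [Finset.sum_range_succ, f_v0, f_v1, f_v2, f_v3, f_v4, f_v5, f_v6, f_v7, f_v8, f_v9, f_v10, f_v11, f_v12, f_v13, f_v14, f_v15, f_v16, f_v17, f_v18, f_v19, f_v20, f_v21, f_v22, f_v23, f_v24, f_v25, f_v26, f_v27, f_v28, f_v29, f_v30, f_v31, f_v32]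

section RealPart

local notation "l" => Real.log 2

lemma hl0 : (0:ℝ) < l := Real.log_pos (by norm_num)
lemma hl693 : (0.693:ℝ) < l := by have := Real.log_two_gt_d9; norm_num at this ⊢; linarith
lemma hl694 : l < (0.694:ℝ) := by have := Real.log_two_lt_d9; norm_num at this ⊢; linarith

lemma log_nat_le (m : ℕ) (c : ℝ) (hm : 1 ≤ m) (hc : 0 < c) :
    Real.log m ≤ (m : ℝ) / c - 1 + Real.log c := by
  have hm0 : (0:ℝ) < m := by exact_mod_cast hm
  have h := Real.log_le_sub_one_of_pos (show (0:ℝ) < (m:ℝ)/c by positivity)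
  rw [Real.log_div (by positivity) (by positivity)] at h
  linarith

lemma master_low : ∀ n : ℕ, 1 ≤ n →
    ((1/3) * Real.log n - (1/18) * l) * n + (4/9) * l ≤ (sumFn pd n : ℝ) * l := by
  intro n
  induction n using Nat.strong_induction_on with
  | _ n ih =>
    intro hn
    rcases eq_or_lt_of_le hn with h1 | h2
    · rw [← h1, S_v1]
      norm_num
      nlinarith [hl0]
    · rcases Nat.even_or_odd n with ⟨m, hm⟩ | ⟨m, hm⟩
      · -- n = 2m
        have hne : n = 2 * m := by omega
        subst hne
        have hm1 : 1 ≤ m := by omega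
        have hm0 : (1:ℝ) ≤ (m:ℝ) := by exact_mod_cast hm1
        have IH := ih m (by omega) hm1
        have hS := S_even_low m
        have hSr : ((2 * sumFn pd m + m : ℕ) : ℝ) * l ≤ (sumFn pd (2*m) : ℝ) * l := by
          apply mul_le_mul_of_nonneg_right _ hl0.le; exact_mod_cast hS
        have hlog : Real.log ((2*m : ℕ) : ℝ) = l + Real.log m := by
          push_cast
          rw [Real.log_mul two_ne_zero (by positivity)]
        rw [hlog]
        push_cast at hSr ⊢
        nlinarith [mul_nonneg hl0.le (by linarith : (0:ℝ) ≤ (m:ℝ))]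
      · -- n = 2m+1
        have hne : n = 2 * m + 1 := by omega
        subst hne
        have hm1 : 1 ≤ m := by omega
        have hm0 : (1:ℝ) ≤ (m:ℝ) := by exact_mod_cast hm1
        have hmpos : (0:ℝ) < (m:ℝ) := by linarith
        have IH := ih m (by omega) hm1
        have hS := S_odd_low m
        have hSr : ((2 * sumFn pd m + m + 1 : ℕ) : ℝ) * l ≤ (sumFn pd (2*m+1) : ℝ) * l := by
          apply mul_le_mul_of_nonneg_right _ hl0.le; exact_mod_cast hS
        -- log estimates
        have hstep : Real.log (2*(m:ℝ)+1) - Real.log (2*(m:ℝ)) ≤ 1/(2*(m:ℝ)) := by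
          have h := Real.log_le_sub_one_of_pos
            (show (0:ℝ) < (2*(m:ℝ)+1)/(2*(m:ℝ)) by positivity)
          rw [Real.log_div (by positivity) (by positivity)] at h
          have : (2*(m:ℝ)+1)/(2*(m:ℝ)) - 1 = 1/(2*(m:ℝ)) := by field_simp; ring
          linarith
        have hlog2m : Real.log (2*(m:ℝ)) = l + Real.log m := by
          rw [Real.log_mul two_ne_zero (by positivity)]
        have h1' : 2*(m:ℝ) * Real.log (2*(m:ℝ)+1) ≤ 2*m*(Real.log m + l) + 1 := by
          have := mul_le_mul_of_nonneg_left hstep (show (0:ℝ) ≤ 2*m by positivity)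
          rw [hlog2m] at this
          have he : 2*(m:ℝ) * (1/(2*(m:ℝ))) = 1 := by field_simp
          nlinarith
        have h2' : Real.log (2*(m:ℝ)+1) ≤ Real.log m + l + 1/2 := by
          have hhalf : 1/(2*(m:ℝ)) ≤ 1/2 := by
            rw [div_le_div_iff₀ (by positivity) (by norm_num)]; linarith
          rw [hlog2m] at hstep
          linarith
        have hA : Real.log (m:ℝ) ≤ (m:ℝ)/4 - 1 + 2*l := by
          have := log_nat_le m 4 hm1 (by norm_num)
          have h4 : Real.log (4:ℝ) = 2*l := by
            rw [show (4:ℝ) = 2^2 by norm_num, Real.log_pow]; push_cast; ring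
          linarith
        have hml : (0.693:ℝ)*m ≤ m*l := by
          have := mul_le_mul_of_nonneg_left hl693.le (show (0:ℝ) ≤ m by positivity)
          linarith [this]
        push_cast at hSr ⊢
        nlinarith [hSr, IH, h1', h2', hA, hml, hl693, hl694, hm0]

end RealPart

section RealPart2

local notation "l" => Real.log 2

lemma odd_up_helper (m a Y lx s t : ℝ) (hx : 17 ≤ m) (hl : 0.693 < lx) (hl2 : lx < 0.694)
    (IH : s * lx ≤ (4/3 * a + 22/9 * lx) * (m+1) + 5/9 * lx)
    (hSr : t * lx ≤ (2 * s + 2*m) * lx)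
    (hY1 : (m+1) * (a + lx) - 1 ≤ (m+1) * Y)
    (hY2 : Y ≤ a + lx)
    (hC : a ≤ (m+1)/16 - 1 + 4*lx)
    (hxl : 0.693 * (m+1) ≤ (m+1) * lx) :
    t * lx ≤ (4/3 * Y + 22/9 * lx) * (2*m+1) + 5/9 * lx := by
  nlinarith [hY1, hY2, hC, hxl]

lemma base_up (n k : ℕ) (h2 : 2^k ≤ n) (hS : 9 * sumFn pd n ≤ (12*k + 22)*n + 5) :
    (sumFn pd n : ℝ) * l ≤ ((4/3) * Real.log n + (22/9)*l) * n + (5/9)*l := by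
  have hkl : (k:ℝ) * l ≤ Real.log n := by
    have h := Real.log_le_log (show (0:ℝ) < 2^k by positivity)
      (show ((2:ℝ))^k ≤ (n:ℝ) by exact_mod_cast h2)
    rwa [Real.log_pow] at h
  have hSc : (9:ℝ) * (sumFn pd n) ≤ (12*(k:ℝ) + 22)*n + 5 := by exact_mod_cast hS
  have hn0 : (0:ℝ) ≤ (n:ℝ) := by positivity
  nlinarith [mul_le_mul_of_nonneg_right hkl (show (0:ℝ) ≤ (4/3)*(n:ℝ) by positivity),
    mul_le_mul_of_nonneg_right hSc hl0.le, hl0]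

lemma master_up : ∀ n : ℕ, 1 ≤ n →
    (sumFn pd n : ℝ) * l ≤ ((4/3) * Real.log n + (22/9)*l) * n + (5/9)*l := by
  intro n
  induction n using Nat.strong_induction_on with
  | _ n ih =>
    intro hn
    rcases eq_or_lt_of_le hn with h1 | h2
    · rw [← h1, S_v1]
      norm_num
      nlinarith [hl0]
    · rcases Nat.even_or_odd n with ⟨m, hm⟩ | ⟨m, hm⟩
      · -- n = 2m
        have hne : n = 2 * m := by omega
        subst hne
        have hm1 : 1 ≤ m := by omega
        have hm0 : (1:ℝ) ≤ (m:ℝ) := by exact_mod_cast hm1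
        have IH := ih m (by omega) hm1
        have hS := S_even_high m
        have hSr : (sumFn pd (2*m) : ℝ) * l ≤ ((2 * sumFn pd m + 2*m : ℕ) : ℝ) * l := by
          apply mul_le_mul_of_nonneg_right _ hl0.le; exact_mod_cast hS
        have hlog : Real.log ((2*m : ℕ) : ℝ) = l + Real.log m := by
          push_cast
          rw [Real.log_mul two_ne_zero (by positivity)]
        rw [hlog]
        push_cast at hSr ⊢
        nlinarith [hl0, mul_le_mul_of_nonneg_right hm0 hl0.le]
      · -- n = 2m+1, m ≥ 1
        have hne : n = 2 * m + 1 := by omega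
        subst hne
        have hm1 : 1 ≤ m := by omega
        by_cases hbig : 18 ≤ m + 1
        · have IH := ih (m+1) (by omega) (by omega)
          have hS := S_odd_high m
          have hSr : (sumFn pd (2*m+1) : ℝ) * l ≤ ((2 * sumFn pd (m+1) + 2*m : ℕ) : ℝ) * l := by
            apply mul_le_mul_of_nonneg_right _ hl0.le; exact_mod_cast hS
          have hx18 : (18:ℝ) ≤ (m:ℝ) + 1 := by
            have : (18:ℝ) ≤ ((m+1 : ℕ):ℝ) := by exact_mod_cast hbig
            push_cast at this; linarith
          have hmpos : (0:ℝ) < (m:ℝ) := by linarith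
          have hlog2 : Real.log (2*((m:ℝ)+1)) = l + Real.log ((m:ℝ)+1) :=
            Real.log_mul two_ne_zero (by linarith)
          have hY2 : Real.log (2*(m:ℝ)+1) ≤ Real.log ((m:ℝ)+1) + l := by
            have h := Real.log_le_log (show (0:ℝ) < 2*(m:ℝ)+1 by linarith)
              (show 2*(m:ℝ)+1 ≤ 2*((m:ℝ)+1) by linarith)
            rw [hlog2] at h
            linarith
          have hstep : Real.log (2*((m:ℝ)+1)) - Real.log (2*(m:ℝ)+1) ≤ 1/(2*(m:ℝ)+1) := by
            have h := Real.log_le_sub_one_of_pos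
              (show (0:ℝ) < (2*((m:ℝ)+1))/(2*(m:ℝ)+1) from
                div_pos (by linarith) (by linarith))
            rw [Real.log_div (by linarith) (by linarith)] at h
            have he : (2*((m:ℝ)+1))/(2*(m:ℝ)+1) - 1 = 1/(2*(m:ℝ)+1) := by
              rw [div_sub_one (by linarith : 2*(m:ℝ)+1 ≠ 0)]
              ring_nf
            linarith
          have hY1 : ((m:ℝ)+1) * (Real.log ((m:ℝ)+1) + l) - 1 ≤
              ((m:ℝ)+1) * Real.log (2*(m:ℝ)+1) := by
            have hmul := mul_le_mul_of_nonneg_left hstep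
              (show (0:ℝ) ≤ (m:ℝ)+1 by linarith)
            have he : ((m:ℝ)+1) * (1/(2*(m:ℝ)+1)) ≤ 1 := by
              rw [mul_one_div, div_le_one (by linarith)]; linarith
            rw [hlog2] at hmul
            nlinarith
          have hC : Real.log ((m:ℝ)+1) ≤ ((m:ℝ)+1)/16 - 1 + 4*l := by
            have h := Real.log_le_sub_one_of_pos
              (show (0:ℝ) < ((m:ℝ)+1)/16 by positivity)
            rw [Real.log_div (by linarith) (by norm_num)] at h
            have h16 : Real.log (16:ℝ) = 4*l := by
              rw [show (16:ℝ) = 2^4 by norm_num, Real.log_pow]; push_cast; ring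
            linarith
          have hxl : (0.693:ℝ)*((m:ℝ)+1) ≤ ((m:ℝ)+1)*l := by
            nlinarith [hl693, hmpos]
          push_cast at hSr IH ⊢
          exact odd_up_helper (m:ℝ) (Real.log ((m:ℝ)+1)) (Real.log (2*(m:ℝ)+1)) l
            (sumFn pd (m+1) : ℝ) (sumFn pd (2*m+1) : ℝ) (by linarith) hl693 hl694
            (by linarith [IH]) (by linarith [hSr]) hY1 hY2 hC hxl
        · -- base cases: m ≤ 16
          have hm16 : m ≤ 16 := by omega
          interval_cases m <;> simp only [Nat.reduceMul, Nat.reduceAdd]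
          · exact base_up 3 1 (by norm_num) (by rw [S_v3]; norm_num)
          · exact base_up 5 2 (by norm_num) (by rw [S_v5]; norm_num)
          · exact base_up 7 2 (by norm_num) (by rw [S_v7]; norm_num)
          · exact base_up 9 3 (by norm_num) (by rw [S_v9]; norm_num)
          · exact base_up 11 3 (by norm_num) (by rw [S_v11]; norm_num)
          · exact base_up 13 3 (by norm_num) (by rw [S_v13]; norm_num)
          · exact base_up 15 3 (by norm_num) (by rw [S_v15]; norm_num)
          · exact base_up 17 4 (by norm_num) (by rw [S_v17]; norm_num)
          · exact base_up 19 4 (by norm_num) (by rw [S_v19]; norm_num)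
          · exact base_up 21 4 (by norm_num) (by rw [S_v21]; norm_num)
          · exact base_up 23 4 (by norm_num) (by rw [S_v23]; norm_num)
          · exact base_up 25 4 (by norm_num) (by rw [S_v25]; norm_num)
          · exact base_up 27 4 (by norm_num) (by rw [S_v27]; norm_num)
          · exact base_up 29 4 (by norm_num) (by rw [S_v29]; norm_num)
          · exact base_up 31 4 (by norm_num) (by rw [S_v31]; norm_num)
          · exact base_up 33 5 (by norm_num) (by rw [S_v33]; norm_num)

end RealPart2

theorem pd_sumFn_bounds (n : ℕ) (hn : 1 ≤ n) :
    ((1 / 3 : ℝ) * Real.logb 2 n - 1 / 18) * (n : ℝ) + 4 / 9 ≤ (sumFn pd n : ℝ) ∧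
      (sumFn pd n : ℝ) ≤ ((4 / 3 : ℝ) * Real.logb 2 n + 22 / 9) * (n : ℝ) + 5 / 9 := by
  have hl := hl0
  constructor
  · rw [← mul_le_mul_iff_of_pos_right hl0]
    have e : (((1 / 3 : ℝ) * Real.logb 2 n - 1 / 18) * (n : ℝ) + 4 / 9) * Real.log 2 =
        ((1/3) * Real.log n - (1/18) * Real.log 2) * n + (4/9) * Real.log 2 := by
      simp only [Real.logb]
      field_simp
    rw [e]
    exact master_low n hn
  · rw [← mul_le_mul_iff_of_pos_right hl0]
    have e : (((4 / 3 : ℝ) * Real.logb 2 n + 22 / 9) * (n : ℝ) + 5 / 9) * Real.log 2 =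
        ((4/3) * Real.log n + (22/9) * Real.log 2) * n + (5/9) * Real.log 2 := by
      simp only [Real.logb]
      field_simp
    rw [e]
    exact master_up n hn
end
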